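/- Let G be a simple graph with edge ideal I(G) ⊆ S = K[x1,…,xn] and let x_i x_j be an edge of G. Then (I(G) : x_i) + (I(G) : x_j) = I(G \ (N_G[x_i] ∪ N_G[x_j])) + (ideal generated by the variables in N_G(x_i) ∪ N_G(x_j)). -/

import Mathlib

open MvPolynomial

/-- The closed neighborhood of a vertex. -/
def closedNbhd {V : Type} (G : SimpleGraph V) (x : V) : Set V :=
  insert x (G.neighborSet x)

/-- A finite set of vertices is a star packing if the closed neighborhoods of its
elements (the vertex sets of the corresponding stars) are pairwise disjoint. -/
def IsStarPacking {V : Type} (G : SimpleGraph V) (s : Finset V) : Prop :=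
  (s : Set V).Pairwise fun x y => Disjoint (closedNbhd G x) (closedNbhd G y)

/-- The star packing number `α₂(G)`: the maximum size of a star packing. -/
noncomputable def starPackingNumber {V : Type} (G : SimpleGraph V) : ℕ :=
  sSup {n | ∃ s : Finset V, IsStarPacking G s ∧ s.card = n}

/-- The whiskered triangle `W(K₃)`: a triangle on vertices `0, 1, 2` with pendant
vertices `3, 4, 5` attached to them respectively. -/
def whiskeredTriangle : SimpleGraph (Fin 6) :=
  SimpleGraph.fromEdgeSet {s(0, 1), s(0, 2), s(1, 2), s(0, 3), s(1, 4), s(2, 5)}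

/-- `G` is `W(K₃)`-free: no induced subgraph of `G` is isomorphic to the whiskered
triangle. -/
def WK3Free {V : Type} (G : SimpleGraph V) : Prop :=
  ¬ ∃ f : Fin 6 ↪ V, ∀ a b, whiskeredTriangle.Adj a b ↔ G.Adj (f a) (f b)

/-- The edge ideal of a graph `G`, in the polynomial ring `K[x_v : v ∈ V]`. -/
noncomputable def edgeIdeal {V : Type} (K : Type) [Field K] (G : SimpleGraph V) :
    Ideal (MvPolynomial V K) :=
  Ideal.span {m | ∃ x y, G.Adj x y ∧ m = X x * X y}

/-- The edge ideal of the induced subgraph `G \ U`, viewed inside the full polynomial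
ring `K[x_v : v ∈ V]`: it is generated by the edges of `G` avoiding `U`. -/
noncomputable def edgeIdealDel {V : Type} (K : Type) [Field K] (G : SimpleGraph V)
    (U : Set V) : Ideal (MvPolynomial V K) :=
  Ideal.span {m | ∃ x y, G.Adj x y ∧ x ∉ U ∧ y ∉ U ∧ m = X x * X y}

private lemma X_mul_X_eq_monomial {V K : Type} [Field K] (x y : V) :
    (X x * X y : MvPolynomial V K) = monomial (Finsupp.single x 1 + Finsupp.single y 1) 1 := by
  rw [monomial_add_single, pow_one, ← X_pow_eq_monomial, pow_one]

private lemma edgeIdealDel_eq_monomial_span {V K : Type} [Field K] (G : SimpleGraph V)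
    (U : Set V) :
    edgeIdealDel K G U = Ideal.span ((fun s => monomial s (1 : K)) ''
      {s | ∃ x y, G.Adj x y ∧ x ∉ U ∧ y ∉ U ∧ s = Finsupp.single x 1 + Finsupp.single y 1}) := by
  unfold edgeIdealDel
  congr 1
  ext f
  constructor
  · rintro ⟨x, y, h1, h2, h3, rfl⟩
    exact ⟨_, ⟨x, y, h1, h2, h3, rfl⟩, (X_mul_X_eq_monomial x y).symm⟩
  · rintro ⟨s, ⟨x, y, h1, h2, h3, rfl⟩, rfl⟩
    exact ⟨x, y, h1, h2, h3, (X_mul_X_eq_monomial x y).symm⟩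

private lemma edgeIdeal_eq_monomial_span {V K : Type} [Field K] (G : SimpleGraph V) :
    edgeIdeal K G = Ideal.span ((fun s => monomial s (1 : K)) ''
      {s | ∃ x y, G.Adj x y ∧ s = Finsupp.single x 1 + Finsupp.single y 1}) := by
  unfold edgeIdeal
  congr 1
  ext f
  constructor
  · rintro ⟨x, y, h1, rfl⟩
    exact ⟨_, ⟨x, y, h1, rfl⟩, (X_mul_X_eq_monomial x y).symm⟩
  · rintro ⟨s, ⟨x, y, h1, rfl⟩, rfl⟩
    exact ⟨x, y, h1, (X_mul_X_eq_monomial x y).symm⟩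

private lemma mem_edgeIdeal_iff {V K : Type} [Field K] {G : SimpleGraph V}
    {f : MvPolynomial V K} :
    f ∈ edgeIdeal K G ↔ ∀ m ∈ f.support, ∃ x y, G.Adj x y ∧
      Finsupp.single x 1 + Finsupp.single y 1 ≤ m := by
  rw [edgeIdeal_eq_monomial_span, mem_ideal_span_monomial_image]
  constructor
  · intro h m hm
    obtain ⟨s, ⟨x, y, h1, rfl⟩, hle⟩ := h m hm
    exact ⟨x, y, h1, hle⟩
  · intro h m hm
    obtain ⟨x, y, h1, hle⟩ := h m hm
    exact ⟨_, ⟨x, y, h1, rfl⟩, hle⟩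

/-- Membership characterization of the right-hand side ideal. -/
private lemma mem_rhs_iff {V K : Type} [Field K] {G : SimpleGraph V}
    (U N : Set V) {f : MvPolynomial V K} :
    f ∈ edgeIdealDel K G U + Ideal.span (X '' N) ↔
      ∀ m ∈ f.support,
        (∃ x y, G.Adj x y ∧ x ∉ U ∧ y ∉ U ∧ Finsupp.single x 1 + Finsupp.single y 1 ≤ m) ∨
        (∃ v ∈ N, m v ≠ 0) := by
  have hX : (X '' N : Set (MvPolynomial V K)) =
      (fun s => monomial s (1 : K)) '' ((fun v => Finsupp.single v 1) '' N) := by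
    rw [Set.image_image]
    apply Set.image_congr
    intro v _
    rw [← X_pow_eq_monomial, pow_one]
  rw [edgeIdealDel_eq_monomial_span, hX, Submodule.add_eq_sup, ← Ideal.span_union,
    ← Set.image_union, mem_ideal_span_monomial_image]
  constructor
  · intro h m hm
    obtain ⟨s, hs | ⟨v, hv, rfl⟩, hle⟩ := h m hm
    · obtain ⟨x, y, h1, h2, h3, rfl⟩ := hs
      exact Or.inl ⟨x, y, h1, h2, h3, hle⟩
    · refine Or.inr ⟨v, hv, ?_⟩
      have := Finsupp.single_le_iff.mp hle
      omega
  · intro h m hm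
    rcases h m hm with ⟨x, y, h1, h2, h3, hle⟩ | ⟨v, hv, hvne⟩
    · exact ⟨_, Or.inl ⟨x, y, h1, h2, h3, rfl⟩, hle⟩
    · exact ⟨_, Or.inr ⟨v, hv, rfl⟩, Finsupp.single_le_iff.mpr (by omega)⟩

/-- The combinatorial heart: divisibility after multiplying by `X xi`. -/
private lemma key_div {V : Type} {G : SimpleGraph V} (xi : V) {x y : V} (hxy : G.Adj x y)
    {m : V →₀ ℕ}
    (h : Finsupp.single x 1 + Finsupp.single y 1 ≤ m + Finsupp.single xi 1) :
    (∃ v, G.Adj xi v ∧ m v ≠ 0) ∨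
      (x ∉ closedNbhd G xi ∧ y ∉ closedNbhd G xi ∧
        Finsupp.single x 1 + Finsupp.single y 1 ≤ m) := by
  classical
  have hne : x ≠ y := hxy.ne
  have hx := Finsupp.le_def.mp h x
  have hy := Finsupp.le_def.mp h y
  rw [Finsupp.add_apply, Finsupp.add_apply, Finsupp.single_eq_same,
    Finsupp.single_eq_of_ne' hne.symm] at hx
  rw [Finsupp.add_apply, Finsupp.add_apply, Finsupp.single_eq_same,
    Finsupp.single_eq_of_ne' hne] at hy
  by_cases hxxi : x = xi
  · subst hxxi
    rw [Finsupp.single_eq_of_ne' hne] at hy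
    exact Or.inl ⟨y, hxy, by omega⟩
  · rw [Finsupp.single_eq_of_ne' (fun hh => hxxi hh.symm)] at hx
    by_cases hyxi : y = xi
    · subst hyxi
      exact Or.inl ⟨x, hxy.symm, by omega⟩
    · rw [Finsupp.single_eq_of_ne' (fun hh => hyxi hh.symm)] at hy
      by_cases hxN : G.Adj xi x
      · exact Or.inl ⟨x, hxN, by omega⟩
      by_cases hyN : G.Adj xi y
      · exact Or.inl ⟨y, hyN, by omega⟩
      refine Or.inr ⟨?_, ?_, ?_⟩
      · simp only [closedNbhd, Set.mem_insert_iff, SimpleGraph.mem_neighborSet]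
        tauto
      · simp only [closedNbhd, Set.mem_insert_iff, SimpleGraph.mem_neighborSet]
        tauto
      · rw [Finsupp.le_def]
        intro a
        rcases eq_or_ne a x with rfl | hax
        · rw [Finsupp.add_apply, Finsupp.single_eq_same, Finsupp.single_eq_of_ne' hne.symm]
          omega
        rcases eq_or_ne a y with rfl | hay
        · rw [Finsupp.add_apply, Finsupp.single_eq_same, Finsupp.single_eq_of_ne' hne]
          omega
        · rw [Finsupp.add_apply, Finsupp.single_eq_of_ne' hax.symm,
            Finsupp.single_eq_of_ne' hay.symm]
          omega

private lemma colon_le_rhs {V : Type} (K : Type) [Field K] (G : SimpleGraph V)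
    (xi xj : V) (hij : G.Adj xi xj) :
    (edgeIdeal K G).colon ((Ideal.span {X xi} : Ideal (MvPolynomial V K)) : Set (MvPolynomial V K)) ≤
      edgeIdealDel K G (closedNbhd G xi ∪ closedNbhd G xj) +
        Ideal.span (X '' (G.neighborSet xi ∪ G.neighborSet xj)) := by
  classical
  intro f hf
  rw [Ideal.mem_colon_span_singleton, mem_edgeIdeal_iff] at hf
  rw [mem_rhs_iff]
  intro m hm
  have hm' : m + Finsupp.single xi 1 ∈ (f * X xi).support := by
    rw [support_mul_X]
    exact Finset.mem_map.mpr ⟨m, hm, rfl⟩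
  obtain ⟨x, y, hxy, hle⟩ := hf _ hm'
  rcases key_div xi hxy hle with ⟨v, hv, hvne⟩ | ⟨hxU, hyU, hle'⟩
  · exact Or.inr ⟨v, Or.inl hv, hvne⟩
  · -- the edge x-y avoids N[xi]; either it also avoids N[xj], or it meets N(xj)
    by_cases hxU' : x ∈ closedNbhd G xj
    · have hxadj : G.Adj xj x := by
        rcases Set.mem_insert_iff.mp hxU' with rfl | hh
        · exact absurd (Set.mem_insert_iff.mpr (Or.inr hij)) hxU
        · exact hh
      refine Or.inr ⟨x, Or.inr hxadj, ?_⟩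
      have hmx := Finsupp.le_def.mp hle' x
      rw [Finsupp.add_apply, Finsupp.single_eq_same,
        Finsupp.single_eq_of_ne' hxy.ne.symm] at hmx
      omega
    by_cases hyU' : y ∈ closedNbhd G xj
    · have hyadj : G.Adj xj y := by
        rcases Set.mem_insert_iff.mp hyU' with rfl | hh
        · exact absurd (Set.mem_insert_iff.mpr (Or.inr hij)) hyU
        · exact hh
      refine Or.inr ⟨y, Or.inr hyadj, ?_⟩
      have hmy := Finsupp.le_def.mp hle' y
      rw [Finsupp.add_apply, Finsupp.single_eq_same,
        Finsupp.single_eq_of_ne' hxy.ne] at hmy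
      omega
    · refine Or.inl ⟨x, y, hxy, ?_, ?_, hle'⟩
      · simp only [Set.mem_union]
        tauto
      · simp only [Set.mem_union]
        tauto

/-- For an edge `x_i x_j` of `G`, `(I(G) : x_i) + (I(G) : x_j)` equals
`I(G \ (N_G[x_i] ∪ N_G[x_j]))` plus the ideal generated by the variables in
`N_G(x_i) ∪ N_G(x_j)`. -/
theorem colon_sum_eq {V : Type} (K : Type) [Field K]
    (G : SimpleGraph V) (xi xj : V) (hij : G.Adj xi xj) :
    (edgeIdeal K G).colon ((Ideal.span {X xi} : Ideal (MvPolynomial V K)) : Set (MvPolynomial V K)) + (edgeIdeal K G).colon ((Ideal.span {X xj} : Ideal (MvPolynomial V K)) : Set (MvPolynomial V K)) =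
      edgeIdealDel K G (closedNbhd G xi ∪ closedNbhd G xj) +
        Ideal.span (X '' (G.neighborSet xi ∪ G.neighborSet xj)) := by
  apply le_antisymm
  · rw [Submodule.add_eq_sup]
    apply sup_le
    · exact colon_le_rhs K G xi xj hij
    · have := colon_le_rhs K G xj xi hij.symm
      rwa [Set.union_comm (closedNbhd G xj), Set.union_comm (G.neighborSet xj)] at this
  · rw [Submodule.add_eq_sup, Submodule.add_eq_sup]
    apply sup_le
    · -- edges avoiding the union are in I(G), hence in I(G) : x_i
      refine le_trans ?_ le_sup_left
      rw [edgeIdealDel]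
      apply Ideal.span_le.mpr
      rintro _ ⟨x, y, hxy, _, _, rfl⟩
      rw [SetLike.mem_coe, Ideal.mem_colon_span_singleton]
      exact Ideal.mul_mem_right _ _ (Ideal.subset_span ⟨x, y, hxy, rfl⟩)
    · apply Ideal.span_le.mpr
      rintro _ ⟨v, hv | hv, rfl⟩
      · apply Submodule.mem_sup_left
        rw [Ideal.mem_colon_span_singleton]
        exact Ideal.subset_span ⟨v, xi, ((SimpleGraph.mem_neighborSet _ _ _).mp hv).symm, rfl⟩
      · apply Submodule.mem_sup_right
        rw [Ideal.mem_colon_span_singleton]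
        exact Ideal.subset_span ⟨v, xj, ((SimpleGraph.mem_neighborSet _ _ _).mp hv).symm, rfl⟩
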